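/- Let Θ = diag(Θ₁,…,Θₙ) be a diagonal n×n matrix with Θⱼ > 0 for all j, and let A be a real m×n matrix with m ≤ n/2. Set ρ = m/n, H = Θ⁻¹ + AᵀA and P = Θ⁻¹ + ρ Iₙ. Let C > 0 be any constant, let l = #{j : Θⱼ⁻¹ < C}, and suppose there exists 0 < δ_l < 1 such that every m×l submatrix B formed of l distinct columns of A satisfies ‖(n/m)·BᵀB − I_l‖₂ ≤ δ_l. If A has orthonormal rows, i.e. AAᵀ = I_m, then every eigenvalue λ of P⁻¹H satisfies |λ − 1| ≤ δ_l + (1/4)·(3 − ρ)²/(ρ δ_l C). -/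

import Mathlib

open scoped BigOperators Matrix.Norms.L2Operator
open Matrix

/-- Property P2: every `m × k` submatrix `B` formed of `k` distinct columns of `A`
satisfies `‖(n/m)·BᵀB − I_k‖₂ ≤ δ` (the norm is the spectral norm). -/
def PropP2 (m n k : ℕ) (A : Matrix (Fin m) (Fin n) ℝ) (δ : ℝ) : Prop :=
  ∀ g : Fin k → Fin n, Function.Injective g →
    ‖((n : ℝ) / m) • ((A.submatrix id g)ᵀ * (A.submatrix id g)) - 1‖ ≤ δ

noncomputable def toE {k : ℕ} (u : Fin k → ℝ) : EuclideanSpace ℝ (Fin k) :=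
  (EuclideanSpace.equiv (Fin k) ℝ).symm u

lemma toE_add {k : ℕ} (u w : Fin k → ℝ) : toE (u + w) = toE u + toE w := rfl

lemma toE_sub {k : ℕ} (u w : Fin k → ℝ) : toE (u - w) = toE u - toE w := rfl

lemma norm_toE_sq {k : ℕ} (u : Fin k → ℝ) : ‖toE u‖ ^ 2 = ∑ i, u i ^ 2 := by
  rw [EuclideanSpace.norm_eq, Real.sq_sqrt (by positivity)]
  simp [toE, Real.norm_eq_abs, sq_abs]

lemma dot_abs_le {k : ℕ} (u w : Fin k → ℝ) : |u ⬝ᵥ w| ≤ ‖toE u‖ * ‖toE w‖ := by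
  have h := abs_real_inner_le_norm (toE u) (toE w)
  have h2 : (inner ℝ (toE u) (toE w) : ℝ) = u ⬝ᵥ w := by
    simp [toE, PiLp.inner_apply, dotProduct, RCLike.inner_apply, mul_comm]
  rwa [h2] at h

lemma mulVec_norm_le {k : ℕ} (M : Matrix (Fin k) (Fin k) ℝ) (u : Fin k → ℝ) :
    ‖toE (M *ᵥ u)‖ ≤ ‖M‖ * ‖toE u‖ := M.l2_opNorm_mulVec (toE u)

lemma dot_self_eq {k : ℕ} (u : Fin k → ℝ) : u ⬝ᵥ u = ∑ i, u i ^ 2 := by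
  simp [dotProduct, sq]

lemma dot_transpose_mul {m n : ℕ} (A : Matrix (Fin m) (Fin n) ℝ) (u : Fin n → ℝ) :
    u ⬝ᵥ ((Aᵀ * A) *ᵥ u) = (A *ᵥ u) ⬝ᵥ (A *ᵥ u) := by
  rw [← Matrix.mulVec_mulVec, Matrix.dotProduct_mulVec, Matrix.vecMul_transpose]

lemma le_of_sq_le_sq' {p q : ℝ} (hp : 0 ≤ p) (hq : 0 ≤ q) (h : p ^ 2 ≤ q ^ 2) : p ≤ q := by
  nlinarith [sq_nonneg (p - q), sq_nonneg (p + q)]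

lemma mulVec_sq_le {m n : ℕ} (A : Matrix (Fin m) (Fin n) ℝ) (h : A * Aᵀ = 1)
    (u : Fin n → ℝ) : (A *ᵥ u) ⬝ᵥ (A *ᵥ u) ≤ u ⬝ᵥ u := by
  set p := (Aᵀ * A) *ᵥ u with hp
  have h1 : (A *ᵥ u) ⬝ᵥ (A *ᵥ u) = u ⬝ᵥ p := (dot_transpose_mul A u).symm
  have hApp : (Aᵀ * A) *ᵥ p = p := by
    rw [hp, Matrix.mulVec_mulVec]
    rw [Matrix.mul_assoc, ← Matrix.mul_assoc A, h, Matrix.one_mul]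
  have h2 : p ⬝ᵥ p = p ⬝ᵥ u := by
    conv_lhs => rw [hp, Matrix.dotProduct_mulVec]
    rw [← Matrix.mulVec_transpose, Matrix.transpose_mul, Matrix.transpose_transpose, hApp]
  have h3 : |u ⬝ᵥ p| ≤ ‖toE u‖ * ‖toE p‖ := dot_abs_le u p
  have h4 : p ⬝ᵥ p = ‖toE p‖ ^ 2 := by rw [dot_self_eq, norm_toE_sq]
  have h5 : u ⬝ᵥ u = ‖toE u‖ ^ 2 := by rw [dot_self_eq, norm_toE_sq]
  have h6 : u ⬝ᵥ p = p ⬝ᵥ u := dotProduct_comm u p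
  have hnp : (0:ℝ) ≤ ‖toE p‖ := norm_nonneg _
  have hnu : (0:ℝ) ≤ ‖toE u‖ := norm_nonneg _
  rcases eq_or_lt_of_le hnp with hz | hz
  · nlinarith [abs_nonneg (u ⬝ᵥ p)]
  · have key : ‖toE p‖ ≤ ‖toE u‖ := by
      have : ‖toE p‖ ^ 2 ≤ ‖toE u‖ * ‖toE p‖ := by
        calc ‖toE p‖ ^ 2 = u ⬝ᵥ p := by rw [← h4, h2, h6]
        _ ≤ |u ⬝ᵥ p| := le_abs_self _
        _ ≤ ‖toE u‖ * ‖toE p‖ := h3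
      nlinarith
    nlinarith [le_abs_self (u ⬝ᵥ p)]

lemma sum_transport {n l : ℕ} (S : Finset (Fin n)) (hS : S.card = l) (F : Fin n → ℝ) :
    ∑ i : Fin l, F ((S.orderIsoOfFin hS i : Fin n)) = ∑ j ∈ S, F j := by
  rw [← Finset.sum_coe_sort S F]
  exact Fintype.sum_equiv (S.orderIsoOfFin hS).toEquiv _ _ (fun i => rfl)

lemma aux_N (ρ δ a b x y z : ℝ) (hρ0 : 0 ≤ ρ) (hρ1 : ρ ≤ 1) (hδ0 : 0 ≤ δ)
    (ha : 0 ≤ a) (hb : 0 ≤ b) (hx : 0 ≤ x) (hy : 0 ≤ y) (hz : 0 ≤ z)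
    (hxu : x ≤ Real.sqrt (ρ * (1 + δ)) * a) (hxl : ρ * (1 - δ) * a ^ 2 ≤ x ^ 2)
    (hyb : y ≤ b) (hzu : z ≤ x + y) (hzl : x ≤ z + y) :
    |z ^ 2 - ρ * (a ^ 2 + b ^ 2)| ≤
      ρ * δ * a ^ 2 + 2 * Real.sqrt (ρ * (1 + δ)) * a * b + b ^ 2 := by
  set σ := Real.sqrt (ρ * (1 + δ)) with hσdef
  have hσ0 : 0 ≤ σ := Real.sqrt_nonneg _
  have hσsq : σ ^ 2 = ρ * (1 + δ) := Real.sq_sqrt (by nlinarith)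
  have hxy : x * y ≤ (σ * a) * b := by
    apply mul_le_mul hxu hyb hy (by positivity)
  rw [abs_le]
  constructor
  · have hz2 : x ^ 2 - 2 * x * y ≤ z ^ 2 := by
      rcases le_or_gt y x with hc | hc
      · nlinarith [sq_nonneg (z - (x - y))]
      · nlinarith
    nlinarith
  · have hz2 : z ^ 2 ≤ (x + y) ^ 2 := by nlinarith
    nlinarith

lemma aux_main (ρ δ C a b : ℝ) (hρ0 : 0 < ρ) (hρ : ρ ≤ 1 / 2) (hδ0 : 0 < δ) (hδ1 : δ < 1)
    (hC : 0 < C) (ha : 0 ≤ a) (hb : 0 ≤ b) :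
    ρ * δ * a ^ 2 + 2 * Real.sqrt (ρ * (1 + δ)) * a * b + b ^ 2 ≤
      (δ + 1 / 4 * (3 - ρ) ^ 2 / (ρ * δ * C)) * (ρ * a ^ 2 + C * b ^ 2) := by
  set K := 1 / 4 * (3 - ρ) ^ 2 / (ρ * δ * C) with hKdef
  have hK : 0 < K := by
    apply div_pos (by nlinarith) (by positivity)
  have hKval : K * (ρ * δ * C) = 1 / 4 * (3 - ρ) ^ 2 := by
    rw [hKdef, div_mul_cancel₀ _ (by positivity)]
  have hσsq : Real.sqrt (ρ * (1 + δ)) = Real.sqrt (K * ρ) * Real.sqrt ((1 + δ) / K) := by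
    rw [← Real.sqrt_mul (by positivity)]
    congr 1
    field_simp
  have hKρ : (Real.sqrt (K * ρ)) ^ 2 = K * ρ := Real.sq_sqrt (by positivity)
  have hδK : (Real.sqrt ((1 + δ) / K)) ^ 2 = (1 + δ) / K := Real.sq_sqrt (by positivity)
  have hamgm : 2 * Real.sqrt (ρ * (1 + δ)) * a * b ≤ K * ρ * a ^ 2 + (1 + δ) / K * b ^ 2 := by
    rw [hσsq]
    nlinarith [sq_nonneg (Real.sqrt (K * ρ) * a - Real.sqrt ((1 + δ) / K) * b)]
  have h2 : (1 + δ) / K ≤ δ * C := by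
    rw [div_le_iff₀ hK]
    have : δ * C * K = 1 / 4 * (3 - ρ) ^ 2 / ρ := by
      rw [eq_div_iff hρ0.ne']; linear_combination hKval
    rw [this, le_div_iff₀ hρ0]
    nlinarith
  have h3 : 1 ≤ K * C := by
    have : K * C = 1 / 4 * (3 - ρ) ^ 2 / (ρ * δ) := by
      rw [eq_div_iff (by positivity)]; linear_combination hKval
    rw [this, le_div_iff₀ (by positivity)]
    nlinarith
  nlinarith [mul_le_mul_of_nonneg_right h2 (sq_nonneg b),
    mul_le_mul_of_nonneg_right h3 (sq_nonneg b), sq_nonneg a, sq_nonneg b]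

set_option maxHeartbeats 2000000 in
/-- Eigenvalue clustering of the preconditioned matrix `P⁻¹H` around 1
when `A` has orthonormal rows, where `H = Θ⁻¹ + AᵀA` and `P = Θ⁻¹ + ρ Iₙ`, `ρ = m/n`. -/
theorem eigenvalue_clustering_orthonormal_rows
    (m n : ℕ) (hmn : 2 * m ≤ n)
    (d : Fin n → ℝ) (hd : ∀ j, 0 < d j)
    (A : Matrix (Fin m) (Fin n) ℝ)
    (C : ℝ) (hC : 0 < C)
    (l : ℕ) (hl : l = (Finset.univ.filter fun j => (d j)⁻¹ < C).card)
    (δl : ℝ) (hδl0 : 0 < δl) (hδl1 : δl < 1)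
    (hP2 : PropP2 m n l A δl)
    (hortho : A * Aᵀ = 1) :
    ∀ lam : ℝ,
      (∃ v : Fin n → ℝ, v ≠ 0 ∧
        ((Matrix.diagonal (fun j => (d j)⁻¹) + ((m : ℝ) / n) • (1 : Matrix (Fin n) (Fin n) ℝ))⁻¹
          * (Matrix.diagonal (fun j => (d j)⁻¹) + Aᵀ * A)).mulVec v = lam • v) →
      |lam - 1| ≤ δl + (1 / 4) * (3 - (m : ℝ) / n) ^ 2 / (((m : ℝ) / n) * δl * C) := by
  rintro lam ⟨v, hv, heig⟩
  obtain ⟨j0, hj0⟩ := Function.ne_iff.1 hv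
  rcases Nat.eq_zero_or_pos m with hm | hm
  · -- degenerate case m = 0 : the matrix is the identity and lam = 1
    subst hm
    have hAT : Aᵀ * A = 0 := by
      ext i j
      simp [Matrix.mul_apply]
    have hdet : IsUnit (Matrix.diagonal fun j : Fin n => (d j)⁻¹).det := by
      rw [Matrix.det_diagonal]
      exact (Finset.prod_pos fun j _ => inv_pos.2 (hd j)).ne'.isUnit
    rw [hAT] at heig
    simp only [Nat.cast_zero, zero_div, zero_smul, add_zero] at heig
    rw [Matrix.nonsing_inv_mul _ hdet, Matrix.one_mulVec] at heig
    have hlam : lam = 1 := by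
      have h := congrFun heig j0
      simp only [Pi.smul_apply, smul_eq_mul] at h
      have : (lam - 1) * v j0 = 0 := by linarith [h]
      rcases mul_eq_zero.1 this with h' | h'
      · linarith
      · exact absurd h' hj0
    subst hlam
    simp only [Nat.cast_zero, zero_div, sub_self, abs_zero, zero_mul, div_zero]
    linarith
  · -- main case : 0 < m
    have hn : 0 < n := by omega
    set ρ : ℝ := (m : ℝ) / n with hρdef
    have hρ0 : 0 < ρ := div_pos (by exact_mod_cast hm) (by exact_mod_cast hn)
    have hρhalf : ρ ≤ 1 / 2 := by
      rw [hρdef, div_le_div_iff₀ (by exact_mod_cast hn) two_pos]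
      have h2n : ((2 * m : ℕ) : ℝ) ≤ (n : ℝ) := by exact_mod_cast hmn
      push_cast at h2n
      linarith
    set e : Fin n → ℝ := fun j => (d j)⁻¹ + ρ with hedef
    have he : ∀ j, 0 < e j := fun j => add_pos (inv_pos.2 (hd j)) hρ0
    have hPdiag : Matrix.diagonal (fun j : Fin n => (d j)⁻¹) + ρ • (1 : Matrix (Fin n) (Fin n) ℝ)
        = Matrix.diagonal e := by
      ext i j
      rcases eq_or_ne i j with h | h
      · subst h; simp [hedef]
      · simp [Matrix.diagonal_apply_ne _ h, Matrix.one_apply_ne h, h]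
    have hdet : IsUnit (Matrix.diagonal e).det := by
      rw [Matrix.det_diagonal]
      exact (Finset.prod_pos fun j _ => he j).ne'.isUnit
    rw [hPdiag] at heig
    have heig2 : (Matrix.diagonal (fun j : Fin n => (d j)⁻¹) + Aᵀ * A) *ᵥ v
        = lam • (Matrix.diagonal e *ᵥ v) := by
      have h1 := congrArg (fun u => Matrix.diagonal e *ᵥ u) heig
      rwa [Matrix.mulVec_mulVec, ← Matrix.mul_assoc, Matrix.mul_nonsing_inv _ hdet,
        Matrix.one_mul, Matrix.mulVec_smul] at h1
    have hDq : v ⬝ᵥ (Matrix.diagonal e *ᵥ v) = ∑ j, e j * v j ^ 2 := by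
      simp only [dotProduct, Matrix.mulVec_diagonal]
      exact Finset.sum_congr rfl fun j _ => by ring
    have hHq : v ⬝ᵥ ((Matrix.diagonal (fun j : Fin n => (d j)⁻¹) + Aᵀ * A) *ᵥ v)
        = (∑ j, (d j)⁻¹ * v j ^ 2) + (A *ᵥ v) ⬝ᵥ (A *ᵥ v) := by
      rw [Matrix.add_mulVec, dotProduct_add, dot_transpose_mul]
      congr 1
      simp only [dotProduct, Matrix.mulVec_diagonal]
      exact Finset.sum_congr rfl fun j _ => by ring
    have hlamq : (∑ j, (d j)⁻¹ * v j ^ 2) + (A *ᵥ v) ⬝ᵥ (A *ᵥ v)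
        = lam * ∑ j, e j * v j ^ 2 := by
      rw [← hHq, ← hDq, heig2, dotProduct_smul, smul_eq_mul]
    -- the set S of columns with small inverse weights
    set S : Finset (Fin n) := Finset.univ.filter (fun j => (d j)⁻¹ < C) with hSdef
    have hScard : S.card = l := hl.symm
    set g : Fin l → Fin n := fun i => ((S.orderIsoOfFin hScard i : Fin n)) with hgdef
    have hg : Function.Injective g := fun i j h =>
      (S.orderIsoOfFin hScard).injective (Subtype.coe_injective h)
    have hgS : ∀ i, g i ∈ S := fun i => (S.orderIsoOfFin hScard i).2
    set vS : Fin n → ℝ := fun j => if j ∈ S then v j else 0 with hvSdef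
    set vT : Fin n → ℝ := fun j => if j ∈ S then 0 else v j with hvTdef
    have hv_split : v = vS + vT := by
      funext j; by_cases h : j ∈ S <;> simp [hvSdef, hvTdef, h]
    have hv2 : ∀ j, v j ^ 2 = vS j ^ 2 + vT j ^ 2 := by
      intro j; by_cases h : j ∈ S <;> simp [hvSdef, hvTdef, h]
    set w : Fin l → ℝ := fun i => v (g i) with hwdef
    have hwS : ∀ i, w i = vS (g i) := fun i => by simp [hwdef, hvSdef, hgS i]
    have hext : ∀ F : Fin n → ℝ, (∀ j ∉ S, F j = 0) → ∑ j ∈ S, F j = ∑ j, F j := by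
      intro F hF
      exact Finset.sum_subset (Finset.subset_univ S) (fun j _ hj => hF j hj)
    have hBw : (A.submatrix id g) *ᵥ w = A *ᵥ vS := by
      funext i
      simp only [Matrix.mulVec, dotProduct, Matrix.submatrix_apply, id_eq]
      rw [← hext (fun j => A i j * vS j) (fun j hj => by simp [hvSdef, hj]),
        ← sum_transport S hScard (fun j => A i j * vS j)]
      exact Finset.sum_congr rfl fun k _ => by rw [hwS k]
    have hww : ∑ i, w i ^ 2 = ∑ j, vS j ^ 2 := by
      rw [← hext (fun j => vS j ^ 2) (fun j hj => by simp [hvSdef, hj]),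
        ← sum_transport S hScard (fun j => vS j ^ 2)]
      exact Finset.sum_congr rfl fun k _ => by rw [hwS k]
    -- P2 bound on the submatrix quadratic form
    have hB := hP2 g hg
    set B := A.submatrix id g with hBdef
    set M := ((n : ℝ) / m) • (Bᵀ * B) - 1 with hMdef
    have hqval : w ⬝ᵥ (M *ᵥ w) = ((n : ℝ) / m) * ((A *ᵥ vS) ⬝ᵥ (A *ᵥ vS)) - ∑ i, w i ^ 2 := by
      rw [hMdef, Matrix.sub_mulVec, Matrix.one_mulVec, dotProduct_sub,
        Matrix.smul_mulVec, dotProduct_smul, smul_eq_mul, dot_transpose_mul, hBw,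
        dot_self_eq, dot_self_eq]
    have hqabs : |w ⬝ᵥ (M *ᵥ w)| ≤ δl * ∑ i, w i ^ 2 := by
      calc |w ⬝ᵥ (M *ᵥ w)| ≤ ‖toE w‖ * ‖toE (M *ᵥ w)‖ := dot_abs_le _ _
      _ ≤ ‖toE w‖ * (‖M‖ * ‖toE w‖) :=
          mul_le_mul_of_nonneg_left (mulVec_norm_le M w) (norm_nonneg _)
      _ = ‖M‖ * ‖toE w‖ ^ 2 := by ring
      _ ≤ δl * ∑ i, w i ^ 2 := by
          rw [norm_toE_sq]
          exact mul_le_mul_of_nonneg_right hB (by positivity)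
    set PS := (A *ᵥ vS) ⬝ᵥ (A *ᵥ vS) with hPSdef
    have habs : |((n : ℝ) / m) * PS - ∑ i, w i ^ 2| ≤ δl * ∑ i, w i ^ 2 := by
      rw [← hqval]; exact hqabs
    have hcρ : ρ * ((n : ℝ) / m) = 1 := by
      rw [hρdef]
      field_simp
    have hPSeq : PS = ρ * (((n : ℝ) / m) * PS) := by
      rw [← mul_assoc, hcρ, one_mul]
    have hPS_u : PS ≤ ρ * (1 + δl) * ∑ j, vS j ^ 2 := by
      have h2 := (abs_le.1 habs).2
      rw [← hww]
      nlinarith [hPSeq]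
    have hPS_l : ρ * (1 - δl) * ∑ j, vS j ^ 2 ≤ PS := by
      have h2 := (abs_le.1 habs).1
      rw [← hww]
      nlinarith [hPSeq]
    -- vector norm facts
    have hx2 : ‖toE (A *ᵥ vS)‖ ^ 2 = PS := by rw [norm_toE_sq, hPSdef, dot_self_eq]
    have hxu : ‖toE (A *ᵥ vS)‖ ≤ Real.sqrt (ρ * (1 + δl)) * ‖toE vS‖ := by
      apply le_of_sq_le_sq' (norm_nonneg _) (by positivity)
      rw [mul_pow, Real.sq_sqrt (by positivity), hx2, norm_toE_sq]
      exact hPS_u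
    have hxl : ρ * (1 - δl) * ‖toE vS‖ ^ 2 ≤ ‖toE (A *ᵥ vS)‖ ^ 2 := by
      rw [hx2, norm_toE_sq]
      exact hPS_l
    have hyb : ‖toE (A *ᵥ vT)‖ ≤ ‖toE vT‖ := by
      apply le_of_sq_le_sq' (norm_nonneg _) (norm_nonneg _)
      rw [norm_toE_sq, norm_toE_sq]
      have h := mulVec_sq_le A hortho vT
      rw [dot_self_eq, dot_self_eq] at h
      exact h
    have hAv : A *ᵥ v = A *ᵥ vS + A *ᵥ vT := by
      rw [hv_split, Matrix.mulVec_add]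
    have hzu : ‖toE (A *ᵥ v)‖ ≤ ‖toE (A *ᵥ vS)‖ + ‖toE (A *ᵥ vT)‖ := by
      rw [hAv, toE_add]; exact norm_add_le _ _
    have hzl : ‖toE (A *ᵥ vS)‖ ≤ ‖toE (A *ᵥ v)‖ + ‖toE (A *ᵥ vT)‖ := by
      have h : A *ᵥ vS = A *ᵥ v - A *ᵥ vT := by
        rw [hAv]; exact (add_sub_cancel_right _ _).symm
      rw [h, toE_sub]; exact norm_sub_le _ _
    -- eigenvalue identity in sum form
    have hNval : (lam - 1) * (∑ j, e j * v j ^ 2)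
        = ‖toE (A *ᵥ v)‖ ^ 2 - ρ * (‖toE vS‖ ^ 2 + ‖toE vT‖ ^ 2) := by
      have hsq : ‖toE (A *ᵥ v)‖ ^ 2 = (A *ᵥ v) ⬝ᵥ (A *ᵥ v) := by
        rw [norm_toE_sq, dot_self_eq]
      have hsplitv : ∑ j, v j ^ 2 = (∑ j, vS j ^ 2) + ∑ j, vT j ^ 2 := by
        rw [← Finset.sum_add_distrib]
        exact Finset.sum_congr rfl fun j _ => hv2 j
      have hesplit : ∑ j, e j * v j ^ 2 = (∑ j, (d j)⁻¹ * v j ^ 2) + ρ * ∑ j, v j ^ 2 := by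
        rw [Finset.mul_sum, ← Finset.sum_add_distrib]
        refine Finset.sum_congr rfl fun j _ => ?_
        show e j * v j ^ 2 = (d j)⁻¹ * v j ^ 2 + ρ * v j ^ 2
        rw [hedef]; ring
      rw [norm_toE_sq (A *ᵥ v), ← dot_self_eq, norm_toE_sq, norm_toE_sq]
      linear_combination -hlamq - hesplit - ρ * hsplitv
    have hDqpos : 0 < ∑ j, e j * v j ^ 2 := by
      apply Finset.sum_pos' (fun j _ => mul_nonneg (he j).le (sq_nonneg _))
      exact ⟨j0, Finset.mem_univ _,
        mul_pos (he j0) (lt_of_le_of_ne (sq_nonneg _) (Ne.symm (pow_ne_zero 2 hj0)))⟩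
    have hDq_low : ρ * ‖toE vS‖ ^ 2 + C * ‖toE vT‖ ^ 2 ≤ ∑ j, e j * v j ^ 2 := by
      rw [norm_toE_sq, norm_toE_sq, Finset.mul_sum, Finset.mul_sum, ← Finset.sum_add_distrib]
      apply Finset.sum_le_sum
      intro j _
      by_cases h : j ∈ S
      · have h1 : vS j = v j := by simp [hvSdef, h]
        have h2 : vT j = 0 := by simp [hvTdef, h]
        have h3 : ρ ≤ e j := le_add_of_nonneg_left (inv_pos.2 (hd j)).le
        rw [h1, h2]
        nlinarith [sq_nonneg (v j)]
      · have h1 : vS j = 0 := by simp [hvSdef, h]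
        have h2 : vT j = v j := by simp [hvTdef, h]
        have h3 : C ≤ e j := by
          have hh : ¬ (d j)⁻¹ < C := by
            intro hcon
            exact h (by simp [hSdef, hcon])
          show C ≤ (d j)⁻¹ + ρ
          linarith [not_lt.1 hh]
        rw [h1, h2]
        nlinarith [sq_nonneg (v j)]
    -- assemble
    have hN := aux_N ρ δl (‖toE vS‖) (‖toE vT‖) (‖toE (A *ᵥ vS)‖) (‖toE (A *ᵥ vT)‖)
      (‖toE (A *ᵥ v)‖) hρ0.le (by linarith) hδl0.le (norm_nonneg _) (norm_nonneg _)
      (norm_nonneg _) (norm_nonneg _) (norm_nonneg _) hxu hxl hyb hzu hzl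
    have hmain := aux_main ρ δl C (‖toE vS‖) (‖toE vT‖) hρ0 hρhalf hδl0 hδl1 hC
      (norm_nonneg _) (norm_nonneg _)
    have hKδ0 : 0 ≤ δl + 1 / 4 * (3 - ρ) ^ 2 / (ρ * δl * C) :=
      add_nonneg hδl0.le
        (div_nonneg (by positivity) (mul_nonneg (mul_nonneg hρ0.le hδl0.le) hC.le))
    have hchain : |lam - 1| * (∑ j, e j * v j ^ 2)
        ≤ (δl + 1 / 4 * (3 - ρ) ^ 2 / (ρ * δl * C)) * (∑ j, e j * v j ^ 2) := by
      calc |lam - 1| * (∑ j, e j * v j ^ 2)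
          = |(lam - 1) * (∑ j, e j * v j ^ 2)| := by
            rw [abs_mul, abs_of_pos hDqpos]
      _ = |‖toE (A *ᵥ v)‖ ^ 2 - ρ * (‖toE vS‖ ^ 2 + ‖toE vT‖ ^ 2)| := by rw [hNval]
      _ ≤ ρ * δl * ‖toE vS‖ ^ 2 + 2 * Real.sqrt (ρ * (1 + δl)) * ‖toE vS‖ * ‖toE vT‖
            + ‖toE vT‖ ^ 2 := hN
      _ ≤ (δl + 1 / 4 * (3 - ρ) ^ 2 / (ρ * δl * C))
            * (ρ * ‖toE vS‖ ^ 2 + C * ‖toE vT‖ ^ 2) := hmain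
      _ ≤ (δl + 1 / 4 * (3 - ρ) ^ 2 / (ρ * δl * C)) * (∑ j, e j * v j ^ 2) :=
            mul_le_mul_of_nonneg_left hDq_low hKδ0
    exact le_of_mul_le_mul_right hchain hDqpos
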